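/- Let m, n ≥ 1, f ∈ ℝ^m, and let B ∈ ℝ^{n×m} with rows b^1, …, b^n be such that M(B) is a bounded lattice-free set. Let Ā ∈ ℝ^{n×m} with rows ā^1, …, ā^n be such that for every integer point y ∈ M(B) ∩ ℤ^m there exists an index i with b^i·(y−f) = 1 and ā^i·(y−f) = 0. Then there exists δ > 0 such that for all 0 < ε < δ, both M(B + εĀ) and M(B − εĀ) are lattice-free. -/

import Mathlib

open Matrix Pointwise

noncomputable section

/-- A point of `ℝ^m` is an integer point if all its coordinates are integers. -/
def IsIntPoint {m : ℕ} (x : Fin m → ℝ) : Prop := ∀ i, ∃ z : ℤ, x i = (z : ℝ)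

/-- A set is lattice-free if its interior contains no integer point. -/
def IsLatticeFree {m : ℕ} (S : Set (Fin m → ℝ)) : Prop :=
  ∀ x ∈ interior S, ¬ IsIntPoint x

/-- `M(B) = {x ∈ ℝ^m | bⁱ · (x - f) ≤ 1 for all rows bⁱ of B}`. -/
def Mset {n m : ℕ} (f : Fin m → ℝ) (B : Matrix (Fin n) (Fin m) ℝ) :
    Set (Fin m → ℝ) :=
  {x | ∀ i, B i ⬝ᵥ (x - f) ≤ 1}

/-- `ψ_B(r) = max_i bⁱ · r` (the Minkowski functional of `M(B)`). -/
def psi {n m : ℕ} (B : Matrix (Fin n) (Fin m) ℝ) (r : Fin m → ℝ) : ℝ :=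
  ⨆ i, B i ⬝ᵥ r

/-- `γ(B) = (ψ_B(r^1), …, ψ_B(r^k))`. -/
def gammaVec {n k : ℕ} (r : Fin k → Fin 2 → ℝ) (B : Matrix (Fin n) (Fin 2) ℝ) :
    Fin k → ℝ :=
  fun j => psi B (r j)

/-- The nonnegative orthant `ℝ^k_+`. -/
def orthant (k : ℕ) : Set (Fin k → ℝ) := {x | ∀ i, 0 ≤ x i}

/-- `Δ = {γ(B) | B ∈ ℝ^{3×2}, M(B) lattice-free}`. -/
def Delta {k : ℕ} (f : Fin 2 → ℝ) (r : Fin k → Fin 2 → ℝ) : Set (Fin k → ℝ) :=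
  {g | ∃ B : Matrix (Fin 3) (Fin 2) ℝ, IsLatticeFree (Mset f B) ∧ g = gammaVec r B}

/-- `Δ' = cl(conv Δ) + ℝ^k_+` (Minkowski sum). -/
def Delta' {k : ℕ} (f : Fin 2 → ℝ) (r : Fin k → Fin 2 → ℝ) : Set (Fin k → ℝ) :=
  closure (convexHull ℝ (Delta f r)) + orthant k

/-- The triangle closure `T = {s ∈ ℝ^k_+ | γ · s ≥ 1 for all γ ∈ Δ}`. -/
def Tset {k : ℕ} (f : Fin 2 → ℝ) (r : Fin k → Fin 2 → ℝ) : Set (Fin k → ℝ) :=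
  {s | s ∈ orthant k ∧ ∀ g ∈ Delta f r, 1 ≤ g ⬝ᵥ s}

/-- `x` is an extreme point of `K`: `x ∈ K` and `x` is not the midpoint of two
points of `K` both different from `x`. -/
def IsExtremePt {E : Type*} [AddCommGroup E] [Module ℝ E] (K : Set E) (x : E) : Prop :=
  x ∈ K ∧ ¬ ∃ y₁ ∈ K, ∃ y₂ ∈ K, y₁ ≠ x ∧ y₂ ≠ x ∧ x = (2⁻¹ : ℝ) • (y₁ + y₂)

/-- A vector is rational if all its coordinates are rational. -/
def IsRatVec {m : ℕ} (x : Fin m → ℝ) : Prop := ∀ i, ∃ q : ℚ, x i = (q : ℝ)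

/-- A maximal lattice-free convex set. -/
def IsMaxLatticeFree {m : ℕ} (S : Set (Fin m → ℝ)) : Prop :=
  Convex ℝ S ∧ IsLatticeFree S ∧
    ∀ S' : Set (Fin m → ℝ), Convex ℝ S' → IsLatticeFree S' → S ⊆ S' → S' = S

lemma cont_dot {n m : ℕ} (f : Fin m → ℝ) (C : Matrix (Fin n) (Fin m) ℝ) (i : Fin n) :
    Continuous (fun x : Fin m → ℝ => C i ⬝ᵥ (x - f)) := by
  have : (fun x : Fin m → ℝ => C i ⬝ᵥ (x - f)) =
      fun x => ∑ j, C i j * (x j - f j) := by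
    funext x; simp [dotProduct]
  rw [this]
  exact continuous_finset_sum _ fun j _ =>
    (continuous_const.mul ((continuous_apply j).sub continuous_const))

lemma interior_Mset {n m : ℕ} (f : Fin m → ℝ) (C : Matrix (Fin n) (Fin m) ℝ) :
    interior (Mset f C) = {x | ∀ i, C i ⬝ᵥ (x - f) < 1} := by
  apply subset_antisymm
  · intro x hx i
    rcases Metric.isOpen_iff.1 isOpen_interior x hx with ⟨r, hr, hball⟩
    by_cases hC : C i ⬝ᵥ C i = 0
    · have : C i = 0 := dotProduct_self_eq_zero.1 hC
      rw [this, zero_dotProduct]; norm_num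
    · have hd : 0 < C i ⬝ᵥ C i := by
        rcases lt_or_eq_of_le (Finset.sum_nonneg fun j _ => mul_self_nonneg (C i j) :
          (0:ℝ) ≤ C i ⬝ᵥ C i) with h | h
        · exact h
        · exact absurd h.symm hC
      set t : ℝ := r / (2 * (‖C i‖ + 1)) with ht
      have hnorm : (0:ℝ) < ‖C i‖ + 1 := by positivity
      have htpos : 0 < t := by positivity
      have hx' : x + t • C i ∈ Mset f C := by
        apply interior_subset
        apply hball
        rw [Metric.mem_ball, dist_eq_norm]
        have : x + t • C i - x = t • C i := by abel
        rw [this, norm_smul, Real.norm_eq_abs, abs_of_pos htpos]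
        have h1 : t * ‖C i‖ ≤ t * (‖C i‖ + 1) := by nlinarith [norm_nonneg (C i)]
        have h2 : t * (‖C i‖ + 1) = r / 2 := by
          rw [ht]; field_simp
        linarith
      have := hx' i
      have heq : C i ⬝ᵥ (x + t • C i - f) = C i ⬝ᵥ (x - f) + t * (C i ⬝ᵥ C i) := by
        have : x + t • C i - f = (x - f) + t • C i := by abel
        rw [this, dotProduct_add, dotProduct_smul]; ring_nf
      rw [heq] at this
      nlinarith
  · intro x hx
    have hopen : IsOpen {x : Fin m → ℝ | ∀ i, C i ⬝ᵥ (x - f) < 1} := by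
      have : {x : Fin m → ℝ | ∀ i, C i ⬝ᵥ (x - f) < 1} =
          ⋂ i, {x | C i ⬝ᵥ (x - f) < 1} := by ext; simp
      rw [this]
      exact isOpen_iInter_of_finite fun i => isOpen_lt (cont_dot f C i) continuous_const
    have hsub : {x : Fin m → ℝ | ∀ i, C i ⬝ᵥ (x - f) < 1} ⊆ Mset f C :=
      fun y hy i => (hy i).le
    exact interior_maximal hsub hopen hx


/-- if `M(B)` is a bounded lattice-free set and every integer point of
`M(B)` lies on a facet whose row of `Ā` is orthogonal to it (relative to `f`),
then `M(B ± εĀ)` is lattice-free for all small enough `ε > 0`. -/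
theorem stmt8 (m n : ℕ) (hm : 1 ≤ m) (hn : 1 ≤ n) (f : Fin m → ℝ)
    (B A : Matrix (Fin n) (Fin m) ℝ)
    (hbdd : Bornology.IsBounded (Mset f B))
    (hlf : IsLatticeFree (Mset f B))
    (hA : ∀ y ∈ Mset f B, IsIntPoint y →
      ∃ i, B i ⬝ᵥ (y - f) = 1 ∧ A i ⬝ᵥ (y - f) = 0) :
    ∃ δ > (0 : ℝ), ∀ ε : ℝ, 0 < ε → ε < δ →
      IsLatticeFree (Mset f (B + ε • A)) ∧ IsLatticeFree (Mset f (B - ε • A)) := by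
  classical
  haveI hFm : Nonempty (Fin m) := ⟨⟨0, hm⟩⟩
  haveI hFn : Nonempty (Fin n) := ⟨⟨0, hn⟩⟩
  set g : (Fin m → ℝ) → ℝ :=
    fun r => Finset.univ.sup' Finset.univ_nonempty (fun i => B i ⬝ᵥ r) with hg
  have hgc : Continuous g := by
    apply Continuous.finset_sup'_apply Finset.univ_nonempty
    intro i _
    have : Continuous (fun r : Fin m → ℝ => B i ⬝ᵥ (r - 0)) := cont_dot 0 B i
    simpa using this
  -- minimum of g on the unit sphere
  have hSne : (Metric.sphere (0 : Fin m → ℝ) 1).Nonempty :=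
    NormedSpace.sphere_nonempty.2 zero_le_one
  obtain ⟨r0, hr0S, hmin⟩ :=
    (isCompact_sphere (0 : Fin m → ℝ) 1).exists_isMinOn hSne hgc.continuousOn
  set c : ℝ := g r0 with hc
  -- f ∈ M(B)
  have hfM : f ∈ Mset f B := by intro i; simp [Mset]
  have hcpos : 0 < c := by
    by_contra hle
    push_neg at hle
    have hall : ∀ i, B i ⬝ᵥ r0 ≤ 0 := fun i =>
      le_trans (Finset.le_sup' (fun i => B i ⬝ᵥ r0) (Finset.mem_univ i)) hle
    obtain ⟨R0, hR0⟩ := hbdd.subset_closedBall f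
    have hR0pos : 0 ≤ R0 := by
      have := hR0 hfM
      simpa using this
    have hmem : f + (R0 + 1) • r0 ∈ Mset f B := by
      intro i
      have : f + (R0 + 1) • r0 - f = (R0 + 1) • r0 := by abel
      rw [this, dotProduct_smul, smul_eq_mul]
      nlinarith [hall i]
    have := hR0 hmem
    rw [Metric.mem_closedBall, dist_eq_norm] at this
    have he : f + (R0 + 1) • r0 - f = (R0 + 1) • r0 := by abel
    rw [he, norm_smul, Real.norm_eq_abs, abs_of_pos (by linarith : (0:ℝ) < R0 + 1)] at this
    have hn1 : ‖r0‖ = 1 := by simpa using hr0S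
    rw [hn1, mul_one] at this
    linarith
  -- lower bound: for every v there is a row with  c‖v‖ ≤ Bᵢ·v
  have hlow : ∀ v : Fin m → ℝ, ∃ i, c * ‖v‖ ≤ B i ⬝ᵥ v := by
    intro v
    by_cases hv : v = 0
    · exact ⟨Classical.arbitrary _, by simp [hv]⟩
    · have hvn : (0:ℝ) < ‖v‖ := norm_pos_iff.2 hv
      set u : Fin m → ℝ := ‖v‖⁻¹ • v with hu
      have huS : u ∈ Metric.sphere (0 : Fin m → ℝ) 1 := by
        simp [hu, norm_smul, abs_of_pos (inv_pos.2 hvn), inv_mul_cancel₀ hvn.ne']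
      have hcu : c ≤ g u := hmin huS
      obtain ⟨i, -, hieq⟩ :=
        Finset.exists_mem_eq_sup' Finset.univ_nonempty (fun i => B i ⬝ᵥ u)
      refine ⟨i, ?_⟩
      have hBi : c ≤ B i ⬝ᵥ u := by rw [← hieq]; exact hcu
      have hvu : v = ‖v‖ • u := by
        rw [hu, smul_smul, mul_inv_cancel₀ hvn.ne', one_smul]
      have hdv : B i ⬝ᵥ v = ‖v‖ * (B i ⬝ᵥ u) := by
        conv_lhs => rw [hvu]
        rw [dotProduct_smul, smul_eq_mul]
      rw [hdv]
      nlinarith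
  -- bound on |Aᵢ·v|
  set CA : ℝ := Finset.univ.sup' Finset.univ_nonempty
    (fun i : Fin n => ∑ j, |A i j|) with hCA
  have hCA0 : 0 ≤ CA := by
    obtain ⟨i⟩ := hFn
    refine le_trans ?_ (Finset.le_sup' _ (Finset.mem_univ i))
    exact Finset.sum_nonneg fun j _ => abs_nonneg _
  have hAbound : ∀ (i : Fin n) (v : Fin m → ℝ), |A i ⬝ᵥ v| ≤ CA * ‖v‖ := by
    intro i v
    have h1 : |A i ⬝ᵥ v| ≤ ∑ j, |A i j| * ‖v‖ := by
      refine le_trans (Finset.abs_sum_le_sum_abs _ _) (Finset.sum_le_sum fun j _ => ?_)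
      rw [abs_mul]
      exact mul_le_mul_of_nonneg_left (by simpa using norm_le_pi_norm v j) (abs_nonneg _)
    rw [← Finset.sum_mul] at h1
    have h2 : (∑ j, |A i j|) ≤ CA :=
      Finset.le_sup' (fun i : Fin n => ∑ j, |A i j|) (Finset.mem_univ i)
    exact h1.trans (mul_le_mul_of_nonneg_right h2 (norm_nonneg v))
  set ε₀ : ℝ := c / (2 * (CA + 1)) with hε₀
  have hε₀pos : 0 < ε₀ := by positivity
  set R : ℝ := 2 / c with hR
  have hRpos : 0 < R := by positivity
  -- any point of a perturbed set is within R of f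
  have hptbd : ∀ (s ε : ℝ), |s| = 1 → 0 < ε → ε < ε₀ →
      ∀ x : Fin m → ℝ, (∀ i, B i ⬝ᵥ (x - f) + s * ε * (A i ⬝ᵥ (x - f)) ≤ 1) →
        ‖x - f‖ ≤ R := by
    intro s ε hs hε hεε₀ x hx
    obtain ⟨i, hi⟩ := hlow (x - f)
    have h2 := hx i
    have h3 : |s * ε * (A i ⬝ᵥ (x - f))| ≤ ε * (CA * ‖x - f‖) := by
      rw [abs_mul, abs_mul, hs, one_mul, abs_of_pos hε]
      exact mul_le_mul_of_nonneg_left (hAbound i _) hε.le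
    have h4 : -(ε * (CA * ‖x - f‖)) ≤ s * ε * (A i ⬝ᵥ (x - f)) := by
      have := neg_abs_le (s * ε * (A i ⬝ᵥ (x - f)))
      linarith
    have h5 : ε * (CA + 1) < c / 2 := by
      rw [hε₀, lt_div_iff₀ (by positivity : (0:ℝ) < 2 * (CA + 1))] at hεε₀
      nlinarith
    have hnn : 0 ≤ ‖x - f‖ := norm_nonneg _
    by_contra hcon
    push_neg at hcon
    have hvpos : 0 < ‖x - f‖ := lt_trans hRpos hcon
    have e1 : ε * (CA + 1) * ‖x - f‖ < (c / 2) * ‖x - f‖ := by nlinarith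
    have e2 : ε * (CA * ‖x - f‖) ≤ ε * (CA + 1) * ‖x - f‖ := by nlinarith
    have e4 : (c / 2) * ‖x - f‖ < 1 := by linarith
    have e5 : (c / 2) * R < 1 := by nlinarith
    rw [hR] at e5
    have e6 : (c / 2) * (2 / c) = 1 := by field_simp
    linarith
  -- the real vector attached to an integer vector
  set yz : (Fin m → ℤ) → (Fin m → ℝ) := fun z i => (z i : ℝ) with hyz
  -- per-integer-point claim
  have claim : ∀ z : Fin m → ℤ, ∃ d : ℝ, 0 < d ∧ ∀ ε : ℝ, 0 < ε → ε < d →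
      ∀ s : ℝ, |s| = 1 →
        ∃ i, 1 ≤ B i ⬝ᵥ (yz z - f) + s * ε * (A i ⬝ᵥ (yz z - f)) := by
    intro z
    by_cases hy : yz z ∈ Mset f B
    · obtain ⟨i, h1, h2⟩ := hA (yz z) hy (fun j => ⟨z j, rfl⟩)
      exact ⟨1, one_pos, fun ε _ _ s _ => ⟨i, by rw [h1, h2]; ring_nf; exact le_refl 1⟩⟩
    · simp only [Mset, Set.mem_setOf_eq, not_forall, not_le] at hy
      obtain ⟨i, hi⟩ := hy
      set a : ℝ := B i ⬝ᵥ (yz z - f) with ha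
      set b : ℝ := A i ⬝ᵥ (yz z - f) with hb
      refine ⟨(a - 1) / (|b| + 1),
        div_pos (by linarith) (by positivity), fun ε hε hεd s hs => ⟨i, ?_⟩⟩
      rw [lt_div_iff₀ (by positivity : (0:ℝ) < |b| + 1)] at hεd
      rw [← ha, ← hb]
      have habs : |s * ε * b| = ε * |b| := by
        rw [abs_mul, abs_mul, hs, one_mul, abs_of_pos hε]
      have := neg_abs_le (s * ε * b)
      nlinarith [abs_nonneg b]
  -- choose a radius for the perturbation
  choose D hDpos hDP using claim
  set N : ℤ := ⌈R + ‖f‖⌉ with hN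
  have hNR : R + ‖f‖ ≤ (N : ℝ) := Int.le_ceil _
  have hN0 : 0 ≤ N := by
    have : (0:ℝ) ≤ (N:ℝ) := le_trans (by positivity) hNR
    exact_mod_cast this
  set T : Finset (Fin m → ℤ) := Finset.Icc (fun _ => -N) (fun _ => N) with hT
  have hTne : T.Nonempty := by
    refine ⟨fun _ => 0, ?_⟩
    rw [hT, Finset.mem_Icc]
    constructor <;> intro j <;> simp [hN0, neg_nonpos_of_nonneg hN0]
  set δ : ℝ := min ε₀ (T.inf' hTne D) with hδ
  have hδpos : 0 < δ := by
    rw [hδ, lt_min_iff]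
    exact ⟨hε₀pos, (Finset.lt_inf'_iff _).2 fun z _ => hDpos z⟩
  refine ⟨δ, hδpos, ?_⟩
  intro ε hε hεδ
  have hεε₀ : ε < ε₀ := lt_of_lt_of_le hεδ (min_le_left _ _)
  -- key step
  have key : ∀ (s : ℝ), |s| = 1 → ∀ C : Matrix (Fin n) (Fin m) ℝ,
      (∀ (i : Fin n) (v : Fin m → ℝ),
        C i ⬝ᵥ v = B i ⬝ᵥ v + s * ε * (A i ⬝ᵥ v)) →
      IsLatticeFree (Mset f C) := by
    intro s hs C hC x hx hxint
    rw [interior_Mset] at hx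
    have hx' : ∀ i, B i ⬝ᵥ (x - f) + s * ε * (A i ⬝ᵥ (x - f)) < 1 := by
      intro i; rw [← hC]; exact hx i
    have hxR : ‖x - f‖ ≤ R := hptbd s ε hs hε hεε₀ x (fun i => (hx' i).le)
    choose z hz using hxint
    have hzx : yz z = x := by funext i; exact (hz i).symm
    have hzT : z ∈ T := by
      rw [hT, Finset.mem_Icc]
      have hb : ∀ i, |z i| ≤ N := by
        intro i
        have h1 : |x i - f i| ≤ ‖x - f‖ := by
          simpa using norm_le_pi_norm (x - f) i
        have h2 : |f i| ≤ ‖f‖ := by simpa using norm_le_pi_norm f i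
        have h3 : |(z i : ℝ)| ≤ (N : ℝ) := by
          rw [← hz i]
          calc |x i| ≤ |x i - f i| + |f i| := by
                have := abs_sub_abs_le_abs_sub (x i) (f i); have := abs_add_le (x i - f i) (f i)
                calc |x i| = |(x i - f i) + f i| := by ring_nf
                  _ ≤ |x i - f i| + |f i| := abs_add_le _ _
            _ ≤ R + ‖f‖ := by linarith
            _ ≤ (N : ℝ) := hNR
        exact_mod_cast h3
      exact ⟨fun i => neg_le_of_abs_le (hb i), fun i => le_of_abs_le (hb i)⟩
    have hεD : ε < D z :=
      lt_of_lt_of_le hεδ (le_trans (min_le_right _ _) (Finset.inf'_le D hzT))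
    obtain ⟨i, hi⟩ := hDP z ε hε hεD s hs
    rw [hzx] at hi
    exact absurd (hx' i) (not_lt.2 hi)
  constructor
  · refine key 1 (by norm_num) (B + ε • A) ?_
    intro i v
    simp [dotProduct, Matrix.add_apply, Matrix.smul_apply, add_mul,
      Finset.sum_add_distrib, Finset.mul_sum, smul_eq_mul]
    exact Finset.sum_congr rfl fun j _ => by ring
  · refine key (-1) (by norm_num) (B - ε • A) ?_
    intro i v
    simp [dotProduct, Matrix.sub_apply, Matrix.smul_apply, sub_mul,
      Finset.sum_sub_distrib, Finset.mul_sum, smul_eq_mul]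
    have h : ∑ x, ε * A i x * v x = ∑ x, ε * (A i x * v x) :=
      Finset.sum_congr rfl fun j _ => by ring
    rw [h]; ring
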